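/- Let Λ = {Λ_i} be a g-frame for H with bounds A, B, G : H → H a bounded bijective operator, Θ_i = Λ_i G, and let m = (m_i) be a positive semi-normalized sequence (0 < a ≤ m_i ≤ b for all i). Then the multiplier M_{m,Λ,Θ} f = ∑_i m_i Λ_i* Θ_i f is invertible on H, with inverse M_{m,Λ,Θ}^{-1} = G^{-1} S_{(√m_i Λ_i)}^{-1}, where S_{(√m_i Λ_i)} is the g-frame operator of the g-frame {√m_i Λ_i}. -/

import Mathlib

open ContinuousLinearMap
local notation "⟪" x ", " y "⟫" => @inner ℂ _ _ x y

theorem stmt7 {H : Type*} [NormedAddCommGroup H] [InnerProductSpace ℂ H] [CompleteSpace H]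
    {J : Type*} {Hi : J → Type*} [∀ i, NormedAddCommGroup (Hi i)]
    [∀ i, InnerProductSpace ℂ (Hi i)] [∀ i, CompleteSpace (Hi i)]
    (Λ : ∀ i, H →L[ℂ] Hi i) (A B : ℝ) (hA : 0 < A)
    (hframe : ∀ f : H, ∃ s : ℝ, HasSum (fun i => ‖Λ i f‖ ^ 2) s ∧
      A * ‖f‖ ^ 2 ≤ s ∧ s ≤ B * ‖f‖ ^ 2)
    (G : H →L[ℂ] H) (hG : Function.Bijective G)
    (m : J → ℝ) (a b : ℝ) (ha : 0 < a) (hm : ∀ i, a ≤ m i ∧ m i ≤ b)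
    (M : H →L[ℂ] H)
    (hM : ∀ f : H, HasSum (fun i => (m i : ℂ) • adjoint (Λ i) (Λ i (G f))) (M f))
    (S : H →L[ℂ] H)
    (hS : ∀ f : H, HasSum (fun i =>
      (Real.sqrt (m i) : ℂ) • adjoint (Λ i) ((Real.sqrt (m i) : ℂ) • Λ i f)) (S f)) :
    (∃ Sinv : H →L[ℂ] H, S * Sinv = 1 ∧ Sinv * S = 1) ∧
    ∀ Ginv Sinv : H →L[ℂ] H, G * Ginv = 1 → Ginv * G = 1 → S * Sinv = 1 → Sinv * S = 1 →
      M * (Ginv * Sinv) = 1 ∧ (Ginv * Sinv) * M = 1 := by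
  have haA : 0 < a * A := mul_pos ha hA
  have hterm : ∀ (i : J) (g : H),
      (Real.sqrt (m i) : ℂ) • adjoint (Λ i) ((Real.sqrt (m i) : ℂ) • Λ i g)
        = (m i : ℂ) • adjoint (Λ i) (Λ i g) := by
    intro i g
    rw [map_smul, smul_smul, ← Complex.ofReal_mul,
      Real.mul_self_sqrt ((ha.trans_le (hm i).1).le)]
  have hS' : ∀ g : H, HasSum (fun i => (m i : ℂ) • adjoint (Λ i) (Λ i g)) (S g) := by
    intro g
    have := hS g
    simp only [hterm] at this
    exact this
  have hMS : M = S * G := by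
    ext f
    exact (hM f).unique (hS' (G f))
  have hcoer : ∀ f : H, a * A * ‖f‖ ^ 2 ≤ Complex.re ⟪f, S f⟫ := by
    intro f
    obtain ⟨s, hs, hAs, _⟩ := hframe f
    have h1 : HasSum (fun i => Complex.re ⟪f, (m i : ℂ) • adjoint (Λ i) (Λ i f)⟫)
        (Complex.re ⟪f, S f⟫) :=
      (hS' f).mapL (Complex.reCLM.comp ((innerSL ℂ f).restrictScalars ℝ))
    have h2 : (fun i => Complex.re ⟪f, (m i : ℂ) • adjoint (Λ i) (Λ i f)⟫)
        = fun i => m i * ‖Λ i f‖ ^ 2 := by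
      funext i
      have h : (⟪Λ i f, Λ i f⟫ : ℂ).re = ‖Λ i f‖ ^ 2 := inner_self_eq_norm_sq (𝕜 := ℂ) _
      rw [inner_smul_right, adjoint_inner_right, Complex.mul_re, Complex.ofReal_re,
        Complex.ofReal_im, h]
      ring
    rw [h2] at h1
    have h3 : a * s ≤ Complex.re ⟪f, S f⟫ :=
      hasSum_le (fun i => mul_le_mul_of_nonneg_right (hm i).1 (sq_nonneg _))
        (hs.mul_left a) h1
    calc a * A * ‖f‖ ^ 2 = a * (A * ‖f‖ ^ 2) := by ring
      _ ≤ a * s := mul_le_mul_of_nonneg_left hAs ha.le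
      _ ≤ _ := h3
  have hnorm : ∀ f : H, a * A * ‖f‖ ≤ ‖S f‖ := by
    intro f
    rcases eq_or_ne f 0 with rfl | hf
    · simp
    have h1 := hcoer f
    have h2 : Complex.re ⟪f, S f⟫ ≤ ‖f‖ * ‖S f‖ :=
      (Complex.re_le_norm _).trans (by
        exact norm_inner_le_norm f (S f))
    have hfpos : 0 < ‖f‖ := norm_pos_iff.2 hf
    have h3 : a * A * ‖f‖ * ‖f‖ ≤ ‖S f‖ * ‖f‖ := by nlinarith [h1, h2]
    exact le_of_mul_le_mul_right h3 hfpos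
  have hker : S.ker = ⊥ := by
    rw [LinearMap.ker_eq_bot']
    intro g hg
    have := hcoer g
    rw [show S g = 0 from hg] at this
    simp only [inner_zero_right, Complex.zero_re] at this
    have : ‖g‖ ^ 2 ≤ 0 := by nlinarith
    have : ‖g‖ = 0 := by nlinarith [sq_nonneg ‖g‖, norm_nonneg g]
    simpa using this
  have hanti : AntilipschitzWith ⟨(a * A)⁻¹, by positivity⟩ S := by
    apply S.antilipschitz_of_bound
    intro x
    change ‖x‖ ≤ (a * A)⁻¹ * ‖S x‖
    rw [inv_mul_eq_div, le_div_iff₀ haA]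
    linarith [hnorm x]
  have hclosed : IsClosed (S.range : Set H) := by
    have : IsClosed (Set.range S) :=
      (hanti.isClosedEmbedding S.uniformContinuous).isClosed_range
    simpa [LinearMap.coe_range] using this
  have hsurj : S.range = ⊤ := by
    haveI : CompleteSpace (S.range) := hclosed.completeSpace_coe
    rw [← Submodule.orthogonal_eq_bot_iff, Submodule.eq_bot_iff]
    intro g hg
    have h0 : ⟪S g, g⟫ = 0 :=
      (Submodule.mem_orthogonal _ g).1 hg (S g) (LinearMap.mem_range_self _ g)
    have h0' : Complex.re ⟪g, S g⟫ = 0 := by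
      rw [← inner_conj_symm, h0]
      simp
    have := hcoer g
    rw [h0'] at this
    have : ‖g‖ ^ 2 ≤ 0 := by nlinarith
    have : ‖g‖ = 0 := by nlinarith [sq_nonneg ‖g‖, norm_nonneg g]
    simpa using this
  let e := ContinuousLinearEquiv.ofBijective S hker hsurj
  have hecoe : ∀ x, e x = S x := fun _ => rfl
  refine ⟨⟨(e.symm : H →L[ℂ] H), ?_, ?_⟩, ?_⟩
  · ext x
    have : S (e.symm x) = e (e.symm x) := (hecoe _).symm
    simp [mul_apply, this]
  · ext x
    have : S x = e x := (hecoe x).symm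
    simp [mul_apply, this]
  · intro Ginv Sinv hGG hGinvG hSS hSinvS
    constructor
    · rw [hMS, mul_assoc, ← mul_assoc G Ginv Sinv, hGG, one_mul, hSS]
    · rw [hMS, mul_assoc Ginv Sinv (S * G), ← mul_assoc Sinv S G, hSinvS, one_mul, hGinvG]
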